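/- arXiv:2001.08475 — 6 statements merged into one kernel-verified Lean document; each statement's English description precedes it below -/
import Mathlib

section
/- If f : ℝ → [0,∞) is log-convex on an interval I ⊆ ℝ and f is not constant on any nondegenerate subinterval of I, then f is strictly convex on I, i.e. f((1−θ)r+θt) < (1−θ)f(r)+θf(t) for all r ≠ t in I and θ ∈ (0,1). -/
/-- If `f : ℝ → [0,∞)` is log-convex on an interval `I ⊆ ℝ` and `f` is not constant
on any nondegenerate subinterval of `I`, then `f` is strictly convex on `I`:
`f ((1-θ)r + θt) < (1-θ) f r + θ f t` for all `r ≠ t` in `I` and `θ ∈ (0,1)`. -/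
theorem logConvex_nonconstant_implies_strictConvex (f : ℝ → ℝ) (I : Set ℝ)
    (hI : Convex ℝ I)
    (hpos : ∀ s ∈ I, 0 < f s)
    (hlc : ∀ r ∈ I, ∀ t ∈ I, ∀ θ : ℝ, θ ∈ Set.Ioo (0 : ℝ) 1 →
      f ((1 - θ) * r + θ * t) ≤ f r ^ (1 - θ) * f t ^ θ)
    (hnc : ∀ a ∈ I, ∀ b ∈ I, a < b →
      ∃ s ∈ Set.Icc a b, ∃ s' ∈ Set.Icc a b, f s ≠ f s') :
    ∀ r ∈ I, ∀ t ∈ I, r ≠ t → ∀ θ : ℝ, θ ∈ Set.Ioo (0 : ℝ) 1 →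
      f ((1 - θ) * r + θ * t) < (1 - θ) * f r + θ * f t := by
  -- helper: strict intermediate point as a convex combination
  have hcomb : ∀ p q w : ℝ, p < q → q < w →
      ∃ β ∈ Set.Ioo (0 : ℝ) 1, q = (1 - β) * p + β * w := by
    intro p q w h1 h2
    have hpw : 0 < w - p := by linarith
    refine ⟨(q - p) / (w - p), ⟨div_pos (by linarith) hpw, ?_⟩, ?_⟩
    · rw [div_lt_one hpw]; linarith
    · field_simp; ring
  -- key statement assuming r < t
  have key : ∀ r ∈ I, ∀ t ∈ I, r < t → ∀ θ : ℝ, θ ∈ Set.Ioo (0 : ℝ) 1 →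
      f ((1 - θ) * r + θ * t) < (1 - θ) * f r + θ * f t := by
    intro r hr t ht hrt θ hθ
    obtain ⟨hθ0, hθ1⟩ := hθ
    have hfr : 0 < f r := hpos r hr
    have hft : 0 < f t := hpos t ht
    have hIcc : Set.Icc r t ⊆ I := hI.ordConnected.out hr ht
    set x := (1 - θ) * r + θ * t with hxdef
    have hrx : r < x := by
      have : x - r = θ * (t - r) := by rw [hxdef]; ring
      nlinarith
    have hxt : x < t := by
      have : t - x = (1 - θ) * (t - r) := by rw [hxdef]; ring
      nlinarith
    have hxI : x ∈ I := hIcc ⟨le_of_lt hrx, le_of_lt hxt⟩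
    have hle := hlc r hr t ht θ ⟨hθ0, hθ1⟩
    by_cases hne : f r = f t
    · -- equal endpoint values
      set c := f r with hc
      have hcpos : 0 < c := hfr
      -- upper bound f y ≤ c on Icc r t
      have hub : ∀ y ∈ Set.Icc r t, f y ≤ c := by
        intro y hy
        rcases eq_or_lt_of_le hy.1 with h | h1
        · rw [← h]
        rcases eq_or_lt_of_le hy.2 with h | h2
        · rw [h, ← hne]
        obtain ⟨β, hβ, hyeq⟩ := hcomb r y t h1 h2
        have := hlc r hr t ht β hβ
        rw [← hyeq, ← hne] at this
        calc f y ≤ c ^ (1 - β) * c ^ β := this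
          _ = c := by rw [← Real.rpow_add hcpos]; simp
      have hxle : f x ≤ c := hub x ⟨le_of_lt hrx, le_of_lt hxt⟩
      rcases lt_or_eq_of_le hxle with h | heq
      · have : (1 - θ) * f r + θ * f t = c := by rw [← hne, ← hc]; ring
        linarith
      · -- f x = c forces f constant on [r,t], contradicting hnc
        exfalso
        have hconst : ∀ y ∈ Set.Icc r t, f y = c := by
          intro y hy
          have hyI : y ∈ I := hIcc hy
          have hyle := hub y hy
          rcases lt_trichotomy y x with hlt | heq' | hgt
          · -- y < x < t : c = f x ≤ f y ^ (1-β) * c ^ β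
            rcases eq_or_lt_of_le hy.1 with h | h1
            · rw [← h]
            obtain ⟨β, hβ, hxeq⟩ := hcomb y x t hlt hxt
            have hb := hlc y hyI t ht β hβ
            rw [← hxeq, heq, ← hne] at hb
            by_contra hyne
            have hylt : f y < c := lt_of_le_of_ne hyle hyne
            have : f y ^ (1 - β) < c ^ (1 - β) :=
              Real.rpow_lt_rpow (le_of_lt (hpos y hyI)) hylt (by linarith [hβ.2])
            have h2 : f y ^ (1 - β) * c ^ β < c ^ (1 - β) * c ^ β := by
              have : 0 < c ^ β := Real.rpow_pos_of_pos hcpos β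
              nlinarith
            rw [← Real.rpow_add hcpos] at h2
            simp at h2
            linarith
          · rw [heq', heq]
          · -- r < x < y : c = f x ≤ c ^ (1-β) * f y ^ β
            obtain ⟨β, hβ, hxeq⟩ := hcomb r x y hrx hgt
            have hb := hlc r hr y hyI β hβ
            rw [← hxeq, heq, ← hc] at hb
            by_contra hyne
            have hylt : f y < c := lt_of_le_of_ne hyle hyne
            have : f y ^ β < c ^ β :=
              Real.rpow_lt_rpow (le_of_lt (hpos y hyI)) hylt hβ.1
            have h2 : c ^ (1 - β) * f y ^ β < c ^ (1 - β) * c ^ β := by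
              have : 0 < c ^ (1 - β) := Real.rpow_pos_of_pos hcpos _
              nlinarith
            rw [← Real.rpow_add hcpos] at h2
            simp at h2
            linarith
        obtain ⟨s, hs, s', hs', hss⟩ := hnc r hr t ht hrt
        exact hss (by rw [hconst s hs, hconst s' hs'])
    · -- f r ≠ f t : strict AM-GM via strict convexity of exp
      have hlog : Real.log (f r) ≠ Real.log (f t) := by
        intro h
        exact hne (by rw [← Real.exp_log hfr, ← Real.exp_log hft, h])
      have hexp := strictConvexOn_exp.2 (Set.mem_univ (Real.log (f r)))
        (Set.mem_univ (Real.log (f t))) hlog (by linarith : (0:ℝ) < 1 - θ) hθ0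
        (by ring)
      simp only [smul_eq_mul] at hexp
      have heq1 : f r ^ (1 - θ) * f t ^ θ =
          Real.exp ((1 - θ) * Real.log (f r) + θ * Real.log (f t)) := by
        rw [Real.exp_add, Real.rpow_def_of_pos hfr, Real.rpow_def_of_pos hft,
          mul_comm (Real.log (f r)), mul_comm (Real.log (f t))]
      rw [Real.exp_log hfr, Real.exp_log hft] at hexp
      calc f x ≤ f r ^ (1 - θ) * f t ^ θ := hle
        _ < (1 - θ) * f r + θ * f t := by rw [heq1]; exact hexp
  -- reduce general case to r < t
  intro r hr t ht hne θ hθ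
  rcases lt_or_gt_of_ne hne with h | h
  · exact key r hr t ht h θ hθ
  · have hθ' : 1 - θ ∈ Set.Ioo (0 : ℝ) 1 := ⟨by linarith [hθ.2], by linarith [hθ.1]⟩
    have := key t ht r hr h (1 - θ) hθ'
    have he : (1 - (1 - θ)) * t + (1 - θ) * r = (1 - θ) * r + θ * t := by ring
    rw [he] at this
    linarith
end

section
/- Let H be a complex Hilbert space and A : H → H a bounded linear operator that is hyponormal, i.e. ‖A*x‖ ≤ ‖Ax‖ for every x ∈ H, where A* is the Hilbert-space adjoint of A. Then for every x ∈ H: 2(Re⟨Ax, x⟩)² ≤ Re⟨A²x, x⟩·‖x‖² + ‖Ax‖²·‖x‖². -/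
open scoped InnerProductSpace

/-- Let `H` be a complex Hilbert space and `A : H →L[ℂ] H` a bounded linear operator
that is hyponormal, i.e. `‖A* x‖ ≤ ‖A x‖` for every `x`. Then for every `x ∈ H`:
`2 (Re⟪A x, x⟫)² ≤ Re⟪A² x, x⟫ ‖x‖² + ‖A x‖² ‖x‖²`. -/
theorem hyponormal_satisfies_logConvexity_criterion
    {H : Type*} [NormedAddCommGroup H] [InnerProductSpace ℂ H] [CompleteSpace H]
    (A : H →L[ℂ] H)
    (hyp : ∀ x : H, ‖ContinuousLinearMap.adjoint A x‖ ≤ ‖A x‖) :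
    ∀ x : H, 2 * (Complex.re ⟪A x, x⟫_ℂ) ^ 2 ≤
      Complex.re ⟪A (A x), x⟫_ℂ * ‖x‖ ^ 2 + ‖A x‖ ^ 2 * ‖x‖ ^ 2 := by
  intro x
  set u := A x with hu
  set v := ContinuousLinearMap.adjoint A x with hv
  -- ⟪A (A x), x⟫ = ⟪A x, A† x⟫
  have hA2 : ⟪A (A x), x⟫_ℂ = ⟪u, v⟫_ℂ := by
    rw [hu, hv, ← ContinuousLinearMap.adjoint_inner_right]
  -- Re ⟪v, x⟫ = Re ⟪u, x⟫
  have hre : Complex.re ⟪v, x⟫_ℂ = Complex.re ⟪u, x⟫_ℂ := by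
    rw [hv, ContinuousLinearMap.adjoint_inner_left, ← hu, ← inner_conj_symm,
      Complex.conj_re]
  -- Cauchy–Schwarz for u + v against x
  have hcs : ‖⟪u + v, x⟫_ℂ‖ ≤ ‖u + v‖ * ‖x‖ := norm_inner_le_norm _ _
  have habs : |Complex.re ⟪u + v, x⟫_ℂ| ≤ ‖⟪u + v, x⟫_ℂ‖ := Complex.abs_re_le_norm _
  have hsq : (Complex.re ⟪u + v, x⟫_ℂ) ^ 2 ≤ ‖u + v‖ ^ 2 * ‖x‖ ^ 2 := by
    have h2 : |Complex.re ⟪u + v, x⟫_ℂ| ≤ ‖u + v‖ * ‖x‖ := habs.trans hcs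
    nlinarith [mul_self_le_mul_self (abs_nonneg (Complex.re ⟪u + v, x⟫_ℂ)) h2,
      sq_abs (Complex.re ⟪u + v, x⟫_ℂ)]
  -- expand the norm
  have hexp : ‖u + v‖ ^ 2 = ‖u‖ ^ 2 + 2 * Complex.re ⟪u, v⟫_ℂ + ‖v‖ ^ 2 :=
    norm_add_sq (𝕜 := ℂ) u v
  have hadd : Complex.re ⟪u + v, x⟫_ℂ = Complex.re ⟪u, x⟫_ℂ + Complex.re ⟪v, x⟫_ℂ := by
    rw [inner_add_left, Complex.add_re]
  have hvu : ‖v‖ ≤ ‖u‖ := hyp x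
  have hvnn : (0:ℝ) ≤ ‖v‖ := norm_nonneg _
  have hxnn : (0:ℝ) ≤ ‖x‖ := norm_nonneg _
  rw [hA2]
  rw [hexp, hadd, hre] at hsq
  nlinarith [hsq, mul_le_mul_of_nonneg_right (mul_self_le_mul_self hvnn hvu)
    (sq_nonneg ‖x‖)]
end

section
/- Let H be a complex Hilbert space and A : H → H a bounded linear operator. Then the following are equivalent: (I) for every x ∈ H, 2(Re⟨Ax, x⟩)² ≤ Re⟨A²x, x⟩·‖x‖² + ‖Ax‖²·‖x‖²; (II) for every u₀ ≠ 0 the height function h(t) = ‖exp(−t·A)u₀‖ is log-convex on [0,∞), i.e. for all 0 ≤ r < s < t, ‖exp(−s·A)u₀‖ ≤ ‖exp(−r·A)u₀‖^{(t−s)/(t−r)} · ‖exp(−t·A)u₀‖^{(s−r)/(t−r)}. -/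
open scoped InnerProductSpace
open NormedSpace

namespace LCaux

variable {H : Type*} [NormedAddCommGroup H] [InnerProductSpace ℂ H] [CompleteSpace H]

noncomputable def U (A : H →L[ℂ] H) (u₀ : H) (t : ℝ) : H :=
  NormedSpace.exp (-(t : ℂ) • A) u₀

lemma U_zero (A : H →L[ℂ] H) (u₀ : H) : U A u₀ 0 = u₀ := by
  simp [U, NormedSpace.exp_zero]

lemma U_ne_zero (A : H →L[ℂ] H) {u₀ : H} (hu₀ : u₀ ≠ 0) (t : ℝ) : U A u₀ t ≠ 0 := by
  intro h
  have hc : Commute ((t : ℂ) • A) (-(t : ℂ) • A) := by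
    simpa [neg_smul] using (Commute.refl ((t : ℂ) • A)).neg_right
  have h1 : NormedSpace.exp ((t : ℂ) • A) * NormedSpace.exp (-(t : ℂ) • A) = 1 := by
    letI : NormedAlgebra ℚ (H →L[ℂ] H) := NormedAlgebra.restrictScalars ℚ ℂ (H →L[ℂ] H)
    rw [← NormedSpace.exp_add_of_commute hc]
    simp [NormedSpace.exp_zero]
  apply hu₀
  calc u₀ = (NormedSpace.exp ((t : ℂ) • A) * NormedSpace.exp (-(t : ℂ) • A)) u₀ := by
        rw [h1]; simp
    _ = NormedSpace.exp ((t : ℂ) • A) (U A u₀ t) := rfl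
    _ = 0 := by rw [h]; simp

lemma comp_ofReal'' {F : Type*} [NormedAddCommGroup F] [NormedSpace ℂ F] {e : ℂ → F} {e' : F}
    {z : ℝ} (h : HasDerivAt e e' (z : ℂ)) : HasDerivAt (fun t : ℝ => e (t : ℂ)) e' z := by
  simpa [Function.comp_def] using (h.hasFDerivAt.restrictScalars ℝ).comp_hasDerivAt z Complex.ofRealCLM.hasDerivAt

lemma hasDerivAt_exp_neg (A : H →L[ℂ] H) (t : ℝ) :
    HasDerivAt (fun s : ℝ => NormedSpace.exp (-(s : ℂ) • A))
      (-(A * NormedSpace.exp (-(t : ℂ) • A))) t := by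
  have h1 : HasDerivAt (fun z : ℂ => NormedSpace.exp (z • A))
      (A * NormedSpace.exp (-(t : ℂ) • A)) (-(t : ℂ)) :=
    hasDerivAt_exp_smul_const' A _
  have h2 : HasDerivAt (fun z : ℂ => -z) (-1 : ℂ) (t : ℂ) := (hasDerivAt_id _).neg
  have h3 := h1.scomp (x := (t : ℂ)) h2
  have h4 : HasDerivAt (fun z : ℂ => NormedSpace.exp (-z • A))
      (-(A * NormedSpace.exp (-(t : ℂ) • A))) (t : ℂ) := by
    have : (fun z : ℂ => NormedSpace.exp (-z • A)) =
        (fun z : ℂ => NormedSpace.exp (z • A)) ∘ Neg.neg := rfl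
    rw [this]
    refine h3.congr_deriv (Eq.symm ?_)
    simp
  exact comp_ofReal'' h4

lemma hasDerivAt_U (A : H →L[ℂ] H) (u₀ : H) (t : ℝ) :
    HasDerivAt (U A u₀) (-(A (U A u₀ t))) t := by
  have h := ((ContinuousLinearMap.apply ℂ H u₀).restrictScalars
      ℝ).hasFDerivAt.comp_hasDerivAt t (hasDerivAt_exp_neg A t)
  have e1 : (⇑((ContinuousLinearMap.apply ℂ H u₀).restrictScalars ℝ) ∘
      fun s : ℝ => NormedSpace.exp (-(s : ℂ) • A)) = U A u₀ := rfl
  rw [e1] at h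
  refine h.congr_deriv (Eq.symm ?_)
  rfl



variable {A : H →L[ℂ] H} {u₀ : H}

noncomputable def F (A : H →L[ℂ] H) (u₀ : H) (t : ℝ) : ℝ := Complex.re ⟪U A u₀ t, U A u₀ t⟫_ℂ
noncomputable def G (A : H →L[ℂ] H) (u₀ : H) (t : ℝ) : ℝ := Complex.re ⟪A (U A u₀ t), U A u₀ t⟫_ℂ
noncomputable def K (A : H →L[ℂ] H) (u₀ : H) (t : ℝ) : ℝ :=
  Complex.re ⟪A (A (U A u₀ t)), U A u₀ t⟫_ℂ + ‖A (U A u₀ t)‖ ^ 2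
noncomputable def p (A : H →L[ℂ] H) (u₀ : H) (t : ℝ) : ℝ := -(2 * G A u₀ t) / F A u₀ t
noncomputable def q (A : H →L[ℂ] H) (u₀ : H) (t : ℝ) : ℝ :=
  (-(2 * -K A u₀ t) * F A u₀ t - -(2 * G A u₀ t) * -(2 * G A u₀ t)) / F A u₀ t ^ 2
noncomputable def g (A : H →L[ℂ] H) (u₀ : H) (t : ℝ) : ℝ := Real.log (F A u₀ t)

lemma re_inner_symm (x y : H) : (⟪x, y⟫_ℂ).re = (⟪y, x⟫_ℂ).re := by
  rw [← inner_conj_symm]; exact Complex.conj_re _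

lemma re_inner_self (x : H) : (⟪x, x⟫_ℂ).re = ‖x‖ ^ 2 := by
  simpa using inner_self_eq_norm_sq (𝕜 := ℂ) x

lemma F_eq (A : H →L[ℂ] H) (u₀ : H) (t : ℝ) : F A u₀ t = ‖U A u₀ t‖ ^ 2 :=
  re_inner_self _

lemma F_pos (A : H →L[ℂ] H) (hu₀ : u₀ ≠ 0) (t : ℝ) : 0 < F A u₀ t := by
  rw [F_eq]
  exact pow_pos (norm_pos_iff.mpr (U_ne_zero A hu₀ t)) 2

lemma hasDerivAt_F (A : H →L[ℂ] H) (u₀ : H) (t : ℝ) :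
    HasDerivAt (F A u₀) (-(2 * G A u₀ t)) t := by
  have h := Complex.reCLM.hasFDerivAt.comp_hasDerivAt t
    (HasDerivAt.inner ℂ (hasDerivAt_U A u₀ t) (hasDerivAt_U A u₀ t))
  have e1 : (⇑Complex.reCLM ∘ fun s => ⟪U A u₀ s, U A u₀ s⟫_ℂ) = F A u₀ := rfl
  rw [e1] at h
  refine h.congr_deriv (Eq.symm ?_)
  simp [inner_neg_left, inner_neg_right, G]
  rw [re_inner_symm]
  ring

lemma hasDerivAt_G (A : H →L[ℂ] H) (u₀ : H) (t : ℝ) :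
    HasDerivAt (G A u₀) (-K A u₀ t) t := by
  have hAU : HasDerivAt (fun s => A (U A u₀ s)) (A (-(A (U A u₀ t)))) t :=
    (A.restrictScalars ℝ).hasFDerivAt.comp_hasDerivAt t (hasDerivAt_U A u₀ t)
  have h := Complex.reCLM.hasFDerivAt.comp_hasDerivAt t
    (HasDerivAt.inner ℂ hAU (hasDerivAt_U A u₀ t))
  have e1 : (⇑Complex.reCLM ∘ fun s => ⟪A (U A u₀ s), U A u₀ s⟫_ℂ) = G A u₀ := rfl
  rw [e1] at h
  refine h.congr_deriv (Eq.symm ?_)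
  simp only [inner_neg_left, inner_neg_right, map_neg, inner_neg_right, Complex.add_re,
    Complex.neg_re, K, map_add, Complex.reCLM_apply]
  rw [re_inner_self]
  ring

lemma hasDerivAt_g (A : H →L[ℂ] H) (hu₀ : u₀ ≠ 0) (t : ℝ) :
    HasDerivAt (g A u₀) (p A u₀ t) t := by
  have h := (hasDerivAt_F A u₀ t).log (F_pos A hu₀ t).ne'
  exact h

lemma hasDerivAt_p (A : H →L[ℂ] H) (hu₀ : u₀ ≠ 0) (t : ℝ) :
    HasDerivAt (p A u₀) (q A u₀ t) t := by
  have hnum : HasDerivAt (fun s => -(2 * G A u₀ s)) (-(2 * -K A u₀ t)) t :=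
    ((hasDerivAt_G A u₀ t).const_mul 2).neg
  exact hnum.div (hasDerivAt_F A u₀ t) (F_pos A hu₀ t).ne'

lemma continuous_U (A : H →L[ℂ] H) (u₀ : H) : Continuous (U A u₀) :=
  continuous_iff_continuousAt.2 fun t => (hasDerivAt_U A u₀ t).continuousAt

lemma continuous_F (A : H →L[ℂ] H) (u₀ : H) : Continuous (F A u₀) :=
  continuous_iff_continuousAt.2 fun t => (hasDerivAt_F A u₀ t).continuousAt

lemma continuous_G (A : H →L[ℂ] H) (u₀ : H) : Continuous (G A u₀) :=
  continuous_iff_continuousAt.2 fun t => (hasDerivAt_G A u₀ t).continuousAt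

lemma continuous_K (A : H →L[ℂ] H) (u₀ : H) : Continuous (K A u₀) := by
  have hU := continuous_U A u₀
  have hAU : Continuous fun s => A (U A u₀ s) := A.continuous.comp hU
  have h1 : Continuous fun s => Complex.re ⟪A (A (U A u₀ s)), U A u₀ s⟫_ℂ :=
    Complex.continuous_re.comp ((A.continuous.comp hAU).inner hU)
  exact h1.add ((hAU.norm).pow 2)

lemma continuous_q (A : H →L[ℂ] H) (hu₀ : u₀ ≠ 0) : Continuous (q A u₀) := by
  apply Continuous.div
  · exact ((continuous_const.mul (continuous_K A u₀).neg).neg.mul (continuous_F A u₀)).sub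
      ((continuous_const.mul (continuous_G A u₀)).neg.mul
        (continuous_const.mul (continuous_G A u₀)).neg)
  · exact (continuous_F A u₀).pow 2
  · intro t
    exact pow_ne_zero _ (F_pos A hu₀ t).ne'

lemma g_eq (A : H →L[ℂ] H) (u₀ : H) (t : ℝ) :
    g A u₀ t = 2 * Real.log ‖U A u₀ t‖ := by
  rw [g, F_eq]
  rw [Real.log_pow]
  norm_num

/-- Forward direction: criterion implies convexity of `g`. -/
lemma convexOn_g (A : H →L[ℂ] H) (hu₀ : u₀ ≠ 0)
    (hyp : ∀ x : H, 2 * (Complex.re ⟪A x, x⟫_ℂ) ^ 2 ≤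
        Complex.re ⟪A (A x), x⟫_ℂ * ‖x‖ ^ 2 + ‖A x‖ ^ 2 * ‖x‖ ^ 2) :
    ConvexOn ℝ Set.univ (g A u₀) := by
  apply convexOn_of_hasDerivWithinAt2_nonneg (f' := p A u₀) (f'' := q A u₀) convex_univ
  · exact (continuous_iff_continuousAt.2 fun t => (hasDerivAt_g A hu₀ t).continuousAt).continuousOn
  · intro x _
    exact (hasDerivAt_g A hu₀ x).hasDerivWithinAt
  · intro x _
    exact (hasDerivAt_p A hu₀ x).hasDerivWithinAt
  · intro t _
    have hx := hyp (U A u₀ t)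
    have hF := F_eq A u₀ t
    have hFp := F_pos A hu₀ t
    apply div_nonneg _ (sq_nonneg _)
    have hKF : K A u₀ t * F A u₀ t =
        Complex.re ⟪A (A (U A u₀ t)), U A u₀ t⟫_ℂ * ‖U A u₀ t‖ ^ 2 +
          ‖A (U A u₀ t)‖ ^ 2 * ‖U A u₀ t‖ ^ 2 := by
      rw [K, hF]; ring
    have hG : G A u₀ t = Complex.re ⟪A (U A u₀ t), U A u₀ t⟫_ℂ := rfl
    rw [← hKF, ← hG] at hx
    nlinarith [hx]



lemma forward (A : H →L[ℂ] H) (hu₀ : u₀ ≠ 0)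
    (hyp : ∀ x : H, 2 * (Complex.re ⟪A x, x⟫_ℂ) ^ 2 ≤
        Complex.re ⟪A (A x), x⟫_ℂ * ‖x‖ ^ 2 + ‖A x‖ ^ 2 * ‖x‖ ^ 2)
    {r s t : ℝ} (hrs : r < s) (hst : s < t) :
    ‖U A u₀ s‖ ≤ ‖U A u₀ r‖ ^ ((t - s) / (t - r)) * ‖U A u₀ t‖ ^ ((s - r) / (t - r)) := by
  set a := (t - s) / (t - r) with ha_def
  set b := (s - r) / (t - r) with hb_def
  have h0 : 0 < t - r := by linarith
  have ha : 0 ≤ a := div_nonneg (by linarith) h0.le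
  have hb : 0 ≤ b := div_nonneg (by linarith) h0.le
  have hab : a + b = 1 := by
    rw [ha_def, hb_def, ← add_div]
    field_simp
    ring
  have hcomb : a * r + b * t = s := by
    rw [ha_def, hb_def]
    field_simp
    ring
  have hcx := (convexOn_g A hu₀ hyp).2 (Set.mem_univ r) (Set.mem_univ t) ha hb hab
  simp only [smul_eq_mul] at hcx
  rw [hcomb] at hcx
  have hUr : 0 < ‖U A u₀ r‖ := norm_pos_iff.mpr (U_ne_zero A hu₀ r)
  have hUs : 0 < ‖U A u₀ s‖ := norm_pos_iff.mpr (U_ne_zero A hu₀ s)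
  have hUt : 0 < ‖U A u₀ t‖ := norm_pos_iff.mpr (U_ne_zero A hu₀ t)
  have hrhs : 0 < ‖U A u₀ r‖ ^ a * ‖U A u₀ t‖ ^ b :=
    mul_pos (Real.rpow_pos_of_pos hUr a) (Real.rpow_pos_of_pos hUt b)
  refine (Real.log_le_log_iff hUs hrhs).mp ?_
  rw [Real.log_mul (Real.rpow_pos_of_pos hUr a).ne' (Real.rpow_pos_of_pos hUt b).ne',
    Real.log_rpow hUr, Real.log_rpow hUt]
  rw [g_eq, g_eq, g_eq] at hcx
  nlinarith [hcx]

lemma backward (A : H →L[ℂ] H) {x : H} (hx : x ≠ 0)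
    (hyp : ∀ r s t : ℝ, 0 ≤ r → r < s → s < t →
      ‖U A x s‖ ≤ ‖U A x r‖ ^ ((t - s) / (t - r)) * ‖U A x t‖ ^ ((s - r) / (t - r))) :
    2 * (Complex.re ⟪A x, x⟫_ℂ) ^ 2 ≤
      Complex.re ⟪A (A x), x⟫_ℂ * ‖x‖ ^ 2 + ‖A x‖ ^ 2 * ‖x‖ ^ 2 := by
  by_contra hcon
  push_neg at hcon
  have hU0 : U A x 0 = x := U_zero A x
  have hq0 : q A x 0 < 0 := by
    have hF0 : F A x 0 = ‖x‖ ^ 2 := by rw [F_eq, hU0]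
    have hG0 : G A x 0 = Complex.re ⟪A x, x⟫_ℂ := by simp only [G, hU0]
    have hK0 : K A x 0 = Complex.re ⟪A (A x), x⟫_ℂ + ‖A x‖ ^ 2 := by simp only [K, hU0]
    rw [q]
    apply div_neg_of_neg_of_pos
    · rw [hF0, hG0, hK0]; nlinarith [hcon]
    · exact pow_pos (F_pos A hx 0) 2
  have hev : ∀ᶠ s in nhds (0 : ℝ), q A x s < 0 :=
    (continuous_q A hx).continuousAt (Iio_mem_nhds hq0)
  obtain ⟨δ, hδ, hball⟩ := Metric.eventually_nhds_iff.mp hev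
  set ε := δ / 3 with hε_def
  have hε0 : 0 < ε := by positivity
  have hiq := hyp 0 ε (2 * ε) le_rfl hε0 (by linarith)
  have e1 : (2 * ε - ε) / (2 * ε - 0) = 1 / 2 := by
    rw [sub_zero]
    field_simp
    ring
  have e2 : (ε - 0) / (2 * ε - 0) = 1 / 2 := by
    rw [sub_zero, sub_zero]
    field_simp
  rw [e1, e2] at hiq
  have hU0' : 0 < ‖U A x 0‖ := norm_pos_iff.mpr (U_ne_zero A hx 0)
  have hUε : 0 < ‖U A x ε‖ := norm_pos_iff.mpr (U_ne_zero A hx ε)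
  have hU2ε : 0 < ‖U A x (2 * ε)‖ := norm_pos_iff.mpr (U_ne_zero A hx (2 * ε))
  have hrhs : 0 < ‖U A x 0‖ ^ ((1 : ℝ) / 2) * ‖U A x (2 * ε)‖ ^ ((1 : ℝ) / 2) :=
    mul_pos (Real.rpow_pos_of_pos hU0' _) (Real.rpow_pos_of_pos hU2ε _)
  have hlog' := (Real.log_le_log_iff hUε hrhs).mpr hiq
  rw [Real.log_mul (Real.rpow_pos_of_pos hU0' _).ne' (Real.rpow_pos_of_pos hU2ε _).ne',
    Real.log_rpow hU0', Real.log_rpow hU2ε] at hlog'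
  have hlog : g A x 0 + g A x (2 * ε) - 2 * g A x ε ≥ 0 := by
    rw [g_eq, g_eq, g_eq]
    nlinarith [hlog']
  have hgc : Continuous (g A x) :=
    continuous_iff_continuousAt.2 fun y => (hasDerivAt_g A hx y).continuousAt
  have hpc : Continuous (p A x) :=
    continuous_iff_continuousAt.2 fun y => (hasDerivAt_p A hx y).continuousAt
  obtain ⟨d, hd, hpd⟩ := exists_hasDerivAt_eq_slope (g A x) (p A x) hε0
    hgc.continuousOn (fun y _ => hasDerivAt_g A hx y)
  obtain ⟨c, hc, hpc'⟩ := exists_hasDerivAt_eq_slope (g A x) (p A x)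
    (show ε < 2 * ε by linarith) hgc.continuousOn (fun y _ => hasDerivAt_g A hx y)
  have hdc : d < c := hd.2.trans hc.1
  obtain ⟨ξ, hξ, hqξ⟩ := exists_hasDerivAt_eq_slope (p A x) (q A x) hdc
    hpc.continuousOn (fun y _ => hasDerivAt_p A hx y)
  have hpdc : p A x d ≤ p A x c := by
    rw [hpd, hpc']
    rw [sub_zero]
    have h2 : 2 * ε - ε = ε := by ring
    rw [h2]
    exact (div_le_div_iff_of_pos_right hε0).mpr (by linarith [hlog])
  have hqξ0 : 0 ≤ q A x ξ := by
    rw [hqξ]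
    apply div_nonneg (by linarith) (by linarith)
  have hξδ : dist ξ (0 : ℝ) < δ := by
    rw [Real.dist_eq, sub_zero, abs_of_pos (hd.1.trans hξ.1)]
    have := hξ.2
    have := hc.2
    rw [hε_def] at *
    linarith
  exact absurd (hball hξδ) (not_lt.mpr hqξ0)

end LCaux

open LCaux in
/-- Let `H` be a complex Hilbert space and `A : H →L[ℂ] H` a bounded linear operator.
The following are equivalent: (I) `2 (Re⟪A x, x⟫)² ≤ Re⟪A² x, x⟫ ‖x‖² + ‖A x‖² ‖x‖²`
for every `x ∈ H`; (II) for every `u₀ ≠ 0` the height function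
`h t = ‖exp (-t • A) u₀‖` is log-convex on `[0,∞)`: for all `0 ≤ r < s < t`,
`h s ≤ h r ^ ((t-s)/(t-r)) * h t ^ ((s-r)/(t-r))`. -/
theorem logConvex_height_iff_criterion
    {H : Type*} [NormedAddCommGroup H] [InnerProductSpace ℂ H] [CompleteSpace H]
    (A : H →L[ℂ] H) :
    (∀ x : H, 2 * (Complex.re ⟪A x, x⟫_ℂ) ^ 2 ≤
        Complex.re ⟪A (A x), x⟫_ℂ * ‖x‖ ^ 2 + ‖A x‖ ^ 2 * ‖x‖ ^ 2) ↔
      (∀ u₀ : H, u₀ ≠ 0 → ∀ r s t : ℝ, 0 ≤ r → r < s → s < t →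
        ‖NormedSpace.exp (-(s : ℂ) • A) u₀‖ ≤
          ‖NormedSpace.exp (-(r : ℂ) • A) u₀‖ ^ ((t - s) / (t - r)) *
            ‖NormedSpace.exp (-(t : ℂ) • A) u₀‖ ^ ((s - r) / (t - r))) := by
  constructor
  · intro hyp u₀ hu₀ r s t _ hrs hst
    exact forward A hu₀ hyp hrs hst
  · intro hyp x
    by_cases hx : x = 0
    · simp [hx]
    · exact backward A hx (fun r s t hr hrs hst => hyp x hx r s t hr hrs hst)
end

section
/- Let H be a complex Hilbert space and A : H → H a bounded linear operator satisfying 2(Re⟨Ax, x⟩)² ≤ Re⟨A²x, x⟩·‖x‖² + ‖Ax‖²·‖x‖² for every x ∈ H. Then for every u₀ with ‖u₀‖ = 1And with h(t) = ‖exp(−t·A)u₀‖, the derivative of h satisfies h'(0) = inf_{t > 0} h'(t); in particular h'(t) ≥ − Re⟨A u₀, u₀⟩ for every t ≥ 0. -/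
open scoped InnerProductSpace

open NormedSpace

section Aux
variable {H : Type*} [NormedAddCommGroup H] [InnerProductSpace ℂ H] [CompleteSpace H]

theorem hd_aux_comp_ofReal {E : Type*} [NormedAddCommGroup E] [NormedSpace ℂ E]
    {e : ℂ → E} {e' : E} {z : ℝ} (h : HasDerivAt e e' z) :
    HasDerivAt (fun y : ℝ => e ↑y) e' z := by
  simpa [Function.comp_def] using (h.hasFDerivAt.restrictScalars ℝ).comp_hasDerivAt z Complex.ofRealCLM.hasDerivAt

theorem hd_aux_derivU (A : H →L[ℂ] H) (u₀ : H) (t : ℝ) :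
    HasDerivAt (fun s : ℝ => exp (-(s : ℂ) • A) u₀)
      (-(A (exp (-(t : ℂ) • A) u₀))) t := by
  have h1 : HasDerivAt (fun z : ℂ => exp (z • A)) (exp ((-(t:ℂ)) • A) * A) (-(t:ℂ)) :=
    hasDerivAt_exp_smul_const A (-(t:ℂ))
  have h2 : HasDerivAt (fun z : ℂ => exp (-z • A)) (-(exp (-(t:ℂ) • A) * A)) (t:ℂ) := by
    simpa [Function.comp_def, neg_smul] using h1.scomp (t:ℂ) (hasDerivAt_neg (t:ℂ))
  have h3 := hd_aux_comp_ofReal h2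
  have h4 := ((ContinuousLinearMap.apply ℂ H u₀).restrictScalars ℝ).hasFDerivAt.comp_hasDerivAt t h3
  have hcomm : Commute (exp (-(t:ℂ) • A)) A := ((Commute.refl A).smul_left (-(t:ℂ))).exp_left
  convert h4 using 1
  · rfl
  simp only [ContinuousLinearMap.coe_restrictScalars', ContinuousLinearMap.apply_apply,
    ContinuousLinearMap.neg_apply, map_neg]
  rw [hcomm.eq, ContinuousLinearMap.mul_apply]

theorem hd_aux_expNeZero (A : H →L[ℂ] H) (u₀ : H) (hu : u₀ ≠ 0) (t : ℝ) :
    exp (-(t : ℂ) • A) u₀ ≠ 0 := by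
  intro h0
  letI : NormedAlgebra ℚ (H →L[ℂ] H) := NormedAlgebra.restrictScalars ℚ ℂ _
  obtain ⟨v, hv⟩ := NormedSpace.isUnit_exp (-(t : ℂ) • A)
  apply hu
  calc u₀ = (1 : H →L[ℂ] H) u₀ := rfl
    _ = ((↑v⁻¹ : H →L[ℂ] H) * exp (-(t : ℂ) • A)) u₀ := by rw [← hv, Units.inv_mul]
    _ = (↑v⁻¹ : H →L[ℂ] H) (exp (-(t : ℂ) • A) u₀) := rfl
    _ = 0 := by rw [h0, map_zero]

theorem hd_aux_innerDeriv (A : H →L[ℂ] H) (u₀ : H) (t : ℝ)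
    (hU : ∀ s : ℝ, HasDerivAt (fun r : ℝ => exp (-(r : ℂ) • A) u₀)
      (-(A (exp (-(s : ℂ) • A) u₀))) s) :
    HasDerivAt (fun s : ℝ => Complex.re ⟪A (exp (-(s : ℂ) • A) u₀), exp (-(s : ℂ) • A) u₀⟫_ℂ)
      (-(Complex.re ⟪A (A (exp (-(t : ℂ) • A) u₀)), exp (-(t : ℂ) • A) u₀⟫_ℂ
          + ‖A (exp (-(t : ℂ) • A) u₀)‖ ^ 2)) t := by
  set u : ℝ → H := fun s => exp (-(s : ℂ) • A) u₀ with hu_def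
  have hAu : HasDerivAt (fun s : ℝ => A (u s)) (A (-(A (u t)))) t :=
    ((A.restrictScalars ℝ).hasFDerivAt).comp_hasDerivAt t (hU t)
  have hinner := HasDerivAt.inner ℂ hAu (hU t)
  have h2 := Complex.reCLM.hasFDerivAt.comp_hasDerivAt t hinner
  convert h2 using 1
  · rfl
  · rfl
  · rfl
  simp only [Complex.reCLM_apply, map_add, map_neg, inner_neg_left, inner_neg_right,
    Complex.neg_re, Complex.add_re]
  rw [← @inner_self_eq_norm_sq ℂ]
  simp only [RCLike.re_to_complex]
  ring

theorem hd_aux_normDeriv (A : H →L[ℂ] H) (u₀ : H) (t : ℝ)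
    (hU : ∀ s : ℝ, HasDerivAt (fun r : ℝ => exp (-(r : ℂ) • A) u₀)
      (-(A (exp (-(s : ℂ) • A) u₀))) s)
    (hne : exp (-(t : ℂ) • A) u₀ ≠ 0) :
    HasDerivAt (fun s : ℝ => ‖exp (-(s : ℂ) • A) u₀‖)
      (-Complex.re ⟪A (exp (-(t : ℂ) • A) u₀), exp (-(t : ℂ) • A) u₀⟫_ℂ /
        ‖exp (-(t : ℂ) • A) u₀‖) t := by
  set u : ℝ → H := fun s => exp (-(s : ℂ) • A) u₀ with hu_def
  have hpos : 0 < ‖u t‖ := norm_pos_iff.mpr hne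
  have hns : ∀ s : ℝ, Complex.re ⟪u s, u s⟫_ℂ = ‖u s‖ ^ 2 := fun s => by
    simpa using inner_self_eq_norm_sq (𝕜 := ℂ) (u s)
  have hinner := HasDerivAt.inner ℂ (hU t) (hU t)
  have hsym : Complex.re ⟪u t, A (u t)⟫_ℂ = Complex.re ⟪A (u t), u t⟫_ℂ := by
    simpa using inner_re_symm (𝕜 := ℂ) (u t) (A (u t))
  have hq : HasDerivAt (fun s : ℝ => Complex.re ⟪u s, u s⟫_ℂ)
      (-(2 * Complex.re ⟪A (u t), u t⟫_ℂ)) t := by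
    have h2 := Complex.reCLM.hasFDerivAt.comp_hasDerivAt t hinner
    convert h2 using 1
    · rfl
    · rfl
    · rfl
    simp only [Complex.reCLM_apply, map_add, inner_neg_left, inner_neg_right,
      Complex.neg_re, Complex.add_re]
    rw [← hsym]
    ring
  have hqpos : Complex.re ⟪u t, u t⟫_ℂ ≠ 0 := by
    rw [hns t]; positivity
  have hsqrt := hq.sqrt hqpos
  have heq : (fun s : ℝ => ‖u s‖) = fun s : ℝ => Real.sqrt (Complex.re ⟪u s, u s⟫_ℂ) := by
    funext s
    rw [hns s, Real.sqrt_sq (norm_nonneg _)]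
  rw [heq]
  convert hsqrt using 1
  rw [hns t, Real.sqrt_sq hpos.le,
    show -(2 * (⟪A (u t), u t⟫_ℂ).re) = 2 * -(⟪A (u t), u t⟫_ℂ).re by ring,
    mul_div_mul_left _ _ (two_ne_zero)]

end Aux


/-- Let `H` be a complex Hilbert space and `A : H →L[ℂ] H` a bounded linear operator
satisfying the log-convexity criterion. For every unit vector `u₀`, with
`h t = ‖exp (-t • A) u₀‖` and its derivative
`h' t = - Re⟪A (exp (-t • A) u₀), exp (-t • A) u₀⟫ / ‖exp (-t • A) u₀‖`, one has
`h' 0 = inf_{t > 0} h' t`; in particular `h' t ≥ - Re⟪A u₀, u₀⟫` for every `t ≥ 0`. -/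
theorem height_derivative_inf_at_zero
    {H : Type*} [NormedAddCommGroup H] [InnerProductSpace ℂ H] [CompleteSpace H]
    (A : H →L[ℂ] H)
    (hcrit : ∀ x : H, 2 * (Complex.re ⟪A x, x⟫_ℂ) ^ 2 ≤
      Complex.re ⟪A (A x), x⟫_ℂ * ‖x‖ ^ 2 + ‖A x‖ ^ 2 * ‖x‖ ^ 2)
    (u₀ : H) (hu₀ : ‖u₀‖ = 1)
    (h' : ℝ → ℝ)
    (hh' : ∀ t : ℝ, h' t =
      -Complex.re ⟪A (NormedSpace.exp (-(t : ℂ) • A) u₀),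
          NormedSpace.exp (-(t : ℂ) • A) u₀⟫_ℂ /
        ‖NormedSpace.exp (-(t : ℂ) • A) u₀‖) :
    h' 0 = sInf (h' '' Set.Ioi (0 : ℝ)) ∧
      ∀ t : ℝ, 0 ≤ t → -Complex.re ⟪A u₀, u₀⟫_ℂ ≤ h' t := by
  have hu0ne : u₀ ≠ 0 := by
    intro h; rw [h, norm_zero] at hu₀; norm_num at hu₀
  have hU : ∀ s : ℝ, HasDerivAt (fun r : ℝ => exp (-(r : ℂ) • A) u₀)
      (-(A (exp (-(s : ℂ) • A) u₀))) s := fun s => hd_aux_derivU A u₀ s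
  have hne : ∀ s : ℝ, exp (-(s : ℂ) • A) u₀ ≠ 0 := hd_aux_expNeZero A u₀ hu0ne
  have hpos : ∀ s : ℝ, (0:ℝ) < ‖exp (-(s : ℂ) • A) u₀‖ := fun s => norm_pos_iff.mpr (hne s)
  have hfun : h' = fun s : ℝ =>
      -Complex.re ⟪A (exp (-(s : ℂ) • A) u₀), exp (-(s : ℂ) • A) u₀⟫_ℂ /
        ‖exp (-(s : ℂ) • A) u₀‖ := funext hh'
  have key : ∀ s : ℝ, ∃ d : ℝ, 0 ≤ d ∧ HasDerivAt h' d s := by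
    intro s
    set u := exp (-(s : ℂ) • A) u₀ with hu_def
    set p := Complex.re ⟪A u, u⟫_ℂ with hp_def
    set n := ‖u‖ with hn_def
    have hd := ((hd_aux_innerDeriv A u₀ s hU).neg).div (hd_aux_normDeriv A u₀ s hU (hne s))
      (hpos s).ne'
    refine ⟨_, ?_, by rw [hfun]; exact hd⟩
    have hn0 : (0:ℝ) < n := hpos s
    have hc := hcrit u
    apply div_nonneg _ (sq_nonneg n)
    have he1 : -p * (-p / n) = p ^ 2 / n := by
      field_simp
    rw [neg_neg]
    change 0 ≤ (Complex.re ⟪A (A u), u⟫_ℂ + ‖A u‖ ^ 2) * n - -p * (-p / n)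
    rw [he1, sub_nonneg, div_le_iff₀ hn0]
    nlinarith [sq_nonneg p]
  have hdiff : Differentiable ℝ h' := fun s => ((key s).choose_spec.2).differentiableAt
  have hderiv : ∀ s, 0 ≤ deriv h' s := fun s => by
    rw [((key s).choose_spec.2).deriv]; exact (key s).choose_spec.1
  have hmono : Monotone h' := monotone_of_deriv_nonneg hdiff hderiv
  have h0 : h' 0 = -Complex.re ⟪A u₀, u₀⟫_ℂ := by
    rw [hh' 0]
    simp [hu₀]
  have hbdd : BddBelow (h' '' Set.Ioi (0:ℝ)) := by
    refine ⟨h' 0, ?_⟩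
    rintro b ⟨r, hr, rfl⟩
    exact hmono (le_of_lt hr)
  constructor
  · refine le_antisymm ?_ ?_
    · refine le_csInf ⟨h' 1, 1, Set.mem_Ioi.mpr one_pos, rfl⟩ ?_
      rintro b ⟨s, hs, rfl⟩
      exact hmono (le_of_lt hs)
    · have htend : Filter.Tendsto h' (nhdsWithin 0 (Set.Ioi (0:ℝ))) (nhds (h' 0)) :=
        (hdiff.continuous.continuousAt).continuousWithinAt.tendsto
      refine ge_of_tendsto htend ?_
      filter_upwards [self_mem_nhdsWithin] with s hs
      exact csInf_le hbdd ⟨s, hs, rfl⟩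
  · intro t ht
    rw [← h0]
    exact hmono ht
end

section
/- Let H be a complex Hilbert space (or a complex Banach space), A : H → H a bounded linear operator, and η ∈ ℝ with η < Re λ for every λ in the spectrum of A. Then there exists a constant M ≥ 1 such that ‖exp(−t·A)‖ ≤ M·e^{−tη} for all t ≥ 0. -/
open NormedSpace
open scoped Nat ENNReal NNReal

theorem my_norm_exp_le {E : Type*} [NormedRing E] [NormedAlgebra ℂ E] [CompleteSpace E]
    (h1 : ‖(1:E)‖ ≤ 1) (x : E) : ‖exp x‖ ≤ Real.exp ‖x‖ := by
  rw [exp_eq_tsum ℂ]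
  have hs := norm_expSeries_summable' (𝕂 := ℂ) x
  have hpow : ∀ n : ℕ, ‖x ^ n‖ ≤ ‖x‖ ^ n := by
    intro n
    rcases Nat.eq_zero_or_pos n with h | h
    · simpa [h] using h1
    · exact norm_pow_le' x h
  calc ‖(∑' (n : ℕ), ((n ! : ℂ))⁻¹ • x ^ n : E)‖ ≤ ∑' (n : ℕ), ‖((n ! : ℂ))⁻¹ • x ^ n‖ :=
        norm_tsum_le_tsum_norm hs
    _ ≤ ∑' (n : ℕ), ‖x‖ ^ n / n ! := by
        refine Summable.tsum_le_tsum (fun n => ?_) hs (Real.summable_pow_div_factorial ‖x‖)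
        rw [norm_smul, div_eq_inv_mul]
        gcongr
        · simp
        · exact hpow n
    _ = Real.exp ‖x‖ := by
        rw [Real.exp_eq_exp_ℝ, exp_eq_tsum_div]

theorem my_spectrum_exp_subset {E : Type*} [NormedRing E] [NormedAlgebra ℂ E] [CompleteSpace E]
    (a : E) : ∀ μ ∈ spectrum ℂ (exp a), ∃ z ∈ spectrum ℂ a, μ = Complex.exp z := by
  classical
  set S : Set E :=
    insert a {y | ∃ l : ℂ, l ∉ spectrum ℂ a ∧ y = Ring.inverse (algebraMap ℂ E l - a)} with hS
  have hres : ∀ l : ℂ, l ∉ spectrum ℂ a → IsUnit (algebraMap ℂ E l - a) := fun l hl => by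
    rwa [spectrum.notMem_iff] at hl
  have hcomm_res : ∀ x : E, Commute x a → ∀ l : ℂ, l ∉ spectrum ℂ a →
      Commute x (Ring.inverse (algebraMap ℂ E l - a)) := by
    intro x hx l hl
    have hu := hres l hl
    have h1 : Commute x (algebraMap ℂ E l - a) :=
      ((Algebra.commute_algebraMap_right l x)).sub_right hx
    rw [← hu.unit_spec] at h1 ⊢
    rw [Ring.inverse_unit]
    exact h1.units_inv_right
  have hSa : ∀ x ∈ S, Commute x a := by
    rintro x (rfl | ⟨l, hl, rfl⟩)
    · exact Commute.refl x
    · exact (hcomm_res a (Commute.refl a) l hl).symm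
  have hScomm : ∀ x ∈ S, ∀ y ∈ S, x * y = y * x := by
    rintro x hx y (rfl | ⟨l, hl, rfl⟩)
    · exact hSa x hx
    · exact hcomm_res x (hSa x hx) l hl
  set B0 := Algebra.adjoin ℂ S with hB0
  letI : CommRing B0 := Algebra.adjoinCommRingOfComm ℂ hScomm
  set B := B0.topologicalClosure with hB
  letI : CommRing B := B0.commRingTopologicalClosure fun x y => mul_comm x y
  letI : NormedCommRing B := { (inferInstance : NormedRing B) with mul_comm := mul_comm }
  haveI : CompleteSpace B := by
    have : IsClosed (B : Set E) := isClosed_closure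
    exact this.completeSpace_coe
  letI : NormedAlgebra ℚ B := NormedAlgebra.restrictScalars ℚ ℂ B
  have haB : a ∈ B := B0.le_topologicalClosure (Algebra.subset_adjoin (Set.mem_insert _ _))
  set aB : B := ⟨a, haB⟩ with haB'
  have hval : ((exp aB : B) : E) = exp a := by
    letI : Algebra ℚ E := RestrictScalars.algebra ℚ ℂ E
    have := map_exp (Subalgebra.val B) continuous_subtype_val aB
    simpa using this
  have hspecB : spectrum ℂ aB ⊆ spectrum ℂ a := by
    intro z hz
    by_contra hza
    refine spectrum.notMem_iff.mpr ?_ hz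
    have hrB : Ring.inverse (algebraMap ℂ E z - a) ∈ B :=
      B0.le_topologicalClosure (Algebra.subset_adjoin (Set.mem_insert_iff.mpr
        (Or.inr ⟨z, hza, rfl⟩)))
    refine IsUnit.of_mul_eq_one (⟨_, hrB⟩ : B) (Subtype.ext ?_)
    push_cast
    simpa using Ring.mul_inverse_cancel _ (hres z hza)
  intro μ hμ
  have hμB : μ ∈ spectrum ℂ (exp aB) := spectrum.subset_subalgebra _ (by rwa [hval])
  obtain ⟨ch, hch⟩ := WeakDual.CharacterSpace.mem_spectrum_iff_exists.mp hμB
  refine ⟨ch aB, hspecB (AlgHom.apply_mem_spectrum (WeakDual.CharacterSpace.equivAlgHom ch) aB), ?_⟩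
  rw [← hch, map_exp ch (map_continuous ch) aB, Complex.exp_eq_exp_ℂ]

/-- Let `H` be a complex Banach space, `A : H →L[ℂ] H` a bounded linear operator and
`η ∈ ℝ` with `η < Re z` for every `z` in the spectrum of `A`. Then there is a
constant `M ≥ 1` with `‖exp (-t • A)‖ ≤ M * e^(-t η)` for all `t ≥ 0`. -/
theorem semigroup_decay_estimate
    {H : Type*} [NormedAddCommGroup H] [NormedSpace ℂ H] [CompleteSpace H]
    (A : H →L[ℂ] H) (η : ℝ)
    (hη : ∀ z ∈ spectrum ℂ A, η < z.re) :
    ∃ M : ℝ, 1 ≤ M ∧ ∀ t : ℝ, 0 ≤ t →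
      ‖NormedSpace.exp (-(t : ℂ) • A)‖ ≤ M * Real.exp (-t * η) := by
  classical
  letI : NormedAlgebra ℚ (H →L[ℂ] H) := NormedAlgebra.restrictScalars ℚ ℂ (H →L[ℂ] H)
  have h1 : ‖(1 : H →L[ℂ] H)‖ ≤ 1 := by
    rw [ContinuousLinearMap.one_def]
    exact ContinuousLinearMap.norm_id_le
  -- a better spectral bound η''
  obtain ⟨η'', hη1, hη2⟩ : ∃ η'', η < η'' ∧ ∀ z ∈ spectrum ℂ A, η'' ≤ z.re := by
    rcases (spectrum ℂ A).eq_empty_or_nonempty with h | h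
    · exact ⟨η + 1, by linarith, by simp [h]⟩
    · obtain ⟨z₀, hz₀, hmin⟩ :=
        (spectrum.isCompact A).exists_isMinOn h (Complex.continuous_re.continuousOn)
      refine ⟨(η + z₀.re) / 2, by have := hη z₀ hz₀; linarith, fun z hz => ?_⟩
      have h2 := hmin hz
      have h3 := hη z₀ hz₀
      simp only [Set.mem_setOf_eq] at h2
      linarith
  set ηm : ℝ := (η + η'') / 2 with hηm
  have hηm1 : η < ηm := by simp [hηm]; linarith
  have hηm2 : ηm < η'' := by simp [hηm]; linarith
  set a := exp (-A) with ha
  -- spectral radius bound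
  have hrad : spectralRadius ℂ a ≤ ENNReal.ofReal (Real.exp (-η'')) := by
    rw [spectralRadius]
    refine iSup₂_le fun μ hμ => ?_
    obtain ⟨z, hz, rfl⟩ := my_spectrum_exp_subset (-A) μ hμ
    have hz' : -z ∈ spectrum ℂ A := by
      rw [← spectrum.neg_eq] at *
      simpa using Set.neg_mem_neg.mpr hz
    have hre : η'' ≤ (-z).re := hη2 _ hz'
    have : ‖Complex.exp z‖ ≤ Real.exp (-η'') := by
      rw [Complex.norm_exp]
      apply Real.exp_le_exp.mpr
      simp only [Complex.neg_re] at hre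
      linarith
    rw [← enorm_eq_nnnorm, ← ofReal_norm]
    exact ENNReal.ofReal_le_ofReal this
  have hlt : spectralRadius ℂ a < ENNReal.ofReal (Real.exp (-ηm)) := by
    refine lt_of_le_of_lt hrad ?_
    rw [ENNReal.ofReal_lt_ofReal_iff (Real.exp_pos _)]
    exact Real.exp_lt_exp.mpr (by linarith)
  obtain ⟨N, hN⟩ := Filter.eventually_atTop.mp
    ((spectrum.pow_nnnorm_pow_one_div_tendsto_nhds_spectralRadius a).eventually_lt_const hlt)
  set N' : ℕ := max N 1 with hN'
  have hpowN : ∀ n : ℕ, N' ≤ n → ‖a ^ n‖ ≤ Real.exp (-ηm) ^ n := by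
    intro n hn
    have hn1 : 1 ≤ n := le_trans (le_max_right N 1) hn
    have h := (hN n (le_trans (le_max_left N 1) hn)).le
    have hne : (n:ℝ) ≠ 0 := Nat.cast_ne_zero.mpr (by omega)
    have hkey : (‖a ^ n‖₊ : ℝ≥0∞) ≤ (ENNReal.ofReal (Real.exp (-ηm))) ^ n := by
      calc (‖a ^ n‖₊ : ℝ≥0∞) = ((‖a ^ n‖₊ : ℝ≥0∞) ^ (1/(n:ℝ))) ^ (n:ℝ) := by
            rw [← ENNReal.rpow_mul, one_div, inv_mul_cancel₀ hne, ENNReal.rpow_one]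
        _ ≤ (ENNReal.ofReal (Real.exp (-ηm))) ^ (n:ℝ) := ENNReal.rpow_le_rpow h (by positivity)
        _ = (ENNReal.ofReal (Real.exp (-ηm))) ^ n := ENNReal.rpow_natCast _ n
    rw [← ENNReal.ofReal_pow (Real.exp_pos _).le, ← enorm_eq_nnnorm, ← ofReal_norm] at hkey
    exact (ENNReal.ofReal_le_ofReal_iff (by positivity)).mp hkey
  have hexp_n : ∀ n : ℕ, a ^ n = exp (-(n : ℂ) • A) := by
    intro n
    rw [ha, ← exp_nsmul]
    congr 1
    rw [smul_neg, ← Nat.cast_smul_eq_nsmul ℂ n A, ← neg_smul]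
  have hnorm_exp : ∀ s : ℝ, 0 ≤ s → ‖exp (-(s:ℂ) • A)‖ ≤ Real.exp (s * ‖A‖) := by
    intro s hs
    refine (my_norm_exp_le h1 _).trans (Real.exp_le_exp.mpr ?_)
    rw [norm_smul (-(s:ℂ)) A, norm_neg, Complex.norm_real, Real.norm_eq_abs,
      abs_of_nonneg hs]
  refine ⟨Real.exp (‖A‖ + |ηm| + N' * (‖A‖ + |η|)), ?_, ?_⟩
  · rw [← Real.exp_zero]
    apply Real.exp_le_exp.mpr
    positivity
  intro t ht
  set n : ℕ := ⌊t⌋₊ with hn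
  set s : ℝ := t - n with hsdef
  have hs0 : 0 ≤ s := by
    have := Nat.floor_le ht
    simp [hsdef]; linarith
  have hs1 : s ≤ 1 := by
    have := Nat.lt_floor_add_one t
    simp [hsdef]; linarith
  have hts : t = (n : ℝ) + s := by simp [hsdef]
  have hsplit : exp (-(t:ℂ) • A) = a ^ n * exp (-(s:ℂ) • A) := by
    rw [hexp_n]
    rw [← exp_add_of_commute (((Commute.refl A).smul_left _).smul_right _)]
    congr 1
    rw [← add_smul]
    congr 1
    rw [hts]
    push_cast
    ring
  rw [hsplit]
  rcases le_or_gt (N' : ℝ) (n : ℝ) with hcase | hcase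
  · -- large t
    have hcase' : N' ≤ n := by exact_mod_cast hcase
    calc ‖a ^ n * exp (-(s:ℂ) • A)‖ ≤ ‖a ^ n‖ * ‖exp (-(s:ℂ) • A)‖ := norm_mul_le _ _
      _ ≤ Real.exp (-ηm) ^ n * Real.exp (s * ‖A‖) := by
          apply mul_le_mul (hpowN n hcase') (hnorm_exp s hs0) (norm_nonneg _) (by positivity)
      _ = Real.exp ((-ηm) * n + s * ‖A‖) := by
          rw [← Real.exp_nat_mul, ← Real.exp_add, mul_comm (n:ℝ)]
      _ ≤ Real.exp (‖A‖ + |ηm| + N' * (‖A‖ + |η|)) * Real.exp (-t * η) := by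
          rw [← Real.exp_add]
          apply Real.exp_le_exp.mpr
          have e1 : t * η ≤ t * ηm := mul_le_mul_of_nonneg_left hηm1.le ht
          have e2 : s * ηm ≤ |ηm| := by
            calc s * ηm ≤ s * |ηm| := mul_le_mul_of_nonneg_left (le_abs_self _) hs0
              _ ≤ 1 * |ηm| := mul_le_mul_of_nonneg_right hs1 (abs_nonneg _)
              _ = |ηm| := one_mul _
          have e3 : s * ‖A‖ ≤ ‖A‖ := by
            calc s * ‖A‖ ≤ 1 * ‖A‖ := mul_le_mul_of_nonneg_right hs1 (norm_nonneg _)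
              _ = ‖A‖ := one_mul _
          have e4 : (0:ℝ) ≤ N' * (‖A‖ + |η|) := by positivity
          have hn' : (n : ℝ) = t - s := by rw [hts]; ring
          rw [hn']
          nlinarith [abs_nonneg ηm, norm_nonneg A]
  · -- small t
    have htN : t < N' := by
      have := Nat.lt_floor_add_one t
      have hn1 : (n:ℝ) + 1 ≤ N' := by exact_mod_cast Nat.succ_le_of_lt (by exact_mod_cast hcase)
      linarith
    calc ‖a ^ n * exp (-(s:ℂ) • A)‖ = ‖exp (-(t:ℂ) • A)‖ := by rw [← hsplit]
      _ ≤ Real.exp (t * ‖A‖) := hnorm_exp t ht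
      _ ≤ Real.exp (‖A‖ + |ηm| + N' * (‖A‖ + |η|)) * Real.exp (-t * η) := by
          rw [← Real.exp_add]
          apply Real.exp_le_exp.mpr
          have e1 : t * ‖A‖ ≤ N' * ‖A‖ := mul_le_mul_of_nonneg_right htN.le (norm_nonneg _)
          have e2 : t * η ≤ N' * |η| := by
            calc t * η ≤ |t * η| := le_abs_self _
              _ = t * |η| := by rw [abs_mul, abs_of_nonneg ht]
              _ ≤ N' * |η| := mul_le_mul_of_nonneg_right htN.le (abs_nonneg _)
          nlinarith [abs_nonneg ηm, norm_nonneg A]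
end

section
/- Let α < β be real numbers and u : [α,β] → ℂ continuously differentiable with u(α) = 0. Then Re ∫_α^β ( |u'(x)|² + u'(x)·conj(u(x)) ) dx = ∫_α^β |u'(x)|² dx + (1/2)|u(β)|², and moreover Re ∫_α^β ( |u'(x)|² + u'(x)·conj(u(x)) ) dx ≥ C₀ · ∫_α^β ( |u(x)|² + |u'(x)|² ) dx where C₀ = min(1/2, (β−α)^{−2}). -/
open MeasureTheory intervalIntegral Set

/-- Cauchy–Schwarz type bound on a finite interval. -/
lemma cs_aux {a b : ℝ} (hab : a ≤ b) {f : ℝ → ℝ} (hf : ContinuousOn f (Set.Icc a b))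
    (hf0 : ∀ t ∈ Set.Icc a b, 0 ≤ f t) :
    (∫ t in a..b, f t) ^ 2 ≤ (b - a) * ∫ t in a..b, f t ^ 2 := by
  have hsub : Set.Ioc a b ⊆ Set.Icc a b := Set.Ioc_subset_Icc_self
  set μ := volume.restrict (Set.Ioc a b) with hμ
  haveI : IsFiniteMeasure μ := by
    constructor
    rw [hμ, Measure.restrict_apply_univ, Real.volume_Ioc]
    exact ENNReal.ofReal_lt_top
  obtain ⟨M, hM⟩ := (isCompact_Icc (a := a) (b := b)).exists_bound_of_continuousOn hf
  have hmeas : AEStronglyMeasurable f μ :=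
    (hf.mono hsub).aestronglyMeasurable measurableSet_Ioc
  have hmem : MemLp f (ENNReal.ofReal 2) μ := by
    refine MemLp.of_bound hmeas M ?_
    refine Filter.eventually_of_mem (self_mem_ae_restrict measurableSet_Ioc) ?_
    exact fun t ht => hM t (hsub ht)
  have hmem1 : MemLp (fun _ : ℝ => (1 : ℝ)) (ENNReal.ofReal 2) μ :=
    memLp_const 1
  have hpq : (2 : ℝ).HolderConjugate 2 := Real.holderConjugate_iff.2 ⟨one_lt_two, by norm_num⟩
  have hf0' : 0 ≤ᵐ[μ] f :=
    Filter.eventually_of_mem (self_mem_ae_restrict measurableSet_Ioc)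
      fun t ht => hf0 t (hsub ht)
  have h := MeasureTheory.integral_mul_le_Lp_mul_Lq_of_nonneg hpq hf0'
    (Filter.Eventually.of_forall fun _ => zero_le_one) hmem hmem1
  simp only [mul_one, one_pow, Real.rpow_two] at h
  have h1 : ∫ _ : ℝ, (1 : ℝ) ∂μ = b - a := by
    simp [hμ, Real.volume_Ioc, ENNReal.toReal_ofReal (sub_nonneg.2 hab), hab]
  rw [h1] at h
  have hI2 : 0 ≤ ∫ t, f t ^ 2 ∂μ := by
    apply MeasureTheory.integral_nonneg; intro t; positivity
  have hInt : (∫ t, f t ∂μ) ^ 2 ≤ (∫ t, f t ^ 2 ∂μ) * (b - a) := by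
    have := (Real.le_sqrt (integral_nonneg_of_ae hf0')
      (mul_nonneg hI2 (sub_nonneg.2 hab))).1 ?_
    · exact this
    rw [Real.sqrt_mul hI2, Real.sqrt_eq_rpow, Real.sqrt_eq_rpow]
    exact h
  rw [intervalIntegral.integral_of_le hab, intervalIntegral.integral_of_le hab]
  calc (∫ t in Set.Ioc a b, f t) ^ 2 ≤ (∫ t, f t ^ 2 ∂μ) * (b - a) := hInt
    _ = (b - a) * ∫ t in Set.Ioc a b, f t ^ 2 := mul_comm _ _

/-- Let `α < β` and `u : [α,β] → ℂ` be continuously differentiable with `u α = 0`.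
Then `Re ∫_α^β (‖u'‖² + u' * conj u) = ∫_α^β ‖u'‖² + (1/2) ‖u β‖²`, and moreover
`Re ∫_α^β (‖u'‖² + u' * conj u) ≥ C₀ ∫_α^β (‖u‖² + ‖u'‖²)` with
`C₀ = min (1/2) ((β - α)⁻²)` (V-ellipticity of the advection–diffusion form). -/
theorem advection_diffusion_form_ellipticity (α β : ℝ) (hαβ : α < β)
    (u u' : ℝ → ℂ)
    (hu' : ∀ x ∈ Set.Icc α β, HasDerivWithinAt u (u' x) (Set.Icc α β) x)
    (hcont : ContinuousOn u' (Set.Icc α β))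
    (hα : u α = 0) :
    (∫ x in α..β, ((‖u' x‖ ^ 2 : ℝ) : ℂ) + u' x * (starRingEnd ℂ) (u x)).re =
        (∫ x in α..β, ‖u' x‖ ^ 2) + (1 / 2) * ‖u β‖ ^ 2 ∧
      min (1 / 2) ((β - α) ^ (2 : ℕ))⁻¹ *
          ∫ x in α..β, (‖u x‖ ^ 2 + ‖u' x‖ ^ 2) ≤
        (∫ x in α..β, ((‖u' x‖ ^ 2 : ℝ) : ℂ) + u' x * (starRingEnd ℂ) (u x)).re := by
  have hle : α ≤ β := hαβ.le
  have hucont : ContinuousOn u (Set.Icc α β) := fun x hx => (hu' x hx).continuousWithinAt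
  -- continuity facts
  have hcont2 : ContinuousOn (fun x => ‖u' x‖ ^ 2) (Set.Icc α β) := hcont.norm.pow 2
  have hconju : ContinuousOn (fun x => (starRingEnd ℂ) (u x)) (Set.Icc α β) :=
    Complex.continuous_conj.comp_continuousOn hucont
  have hcontmul : ContinuousOn (fun x => (u' x * (starRingEnd ℂ) (u x)).re) (Set.Icc α β) :=
    Complex.continuous_re.comp_continuousOn (hcont.mul hconju)
  have hcont2mul : ContinuousOn (fun x => 2 * (u' x * (starRingEnd ℂ) (u x)).re)
      (Set.Icc α β) := continuousOn_const.mul hcontmul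
  -- FTC for ‖u‖^2
  have hderiv : ∀ x ∈ Set.Icc α β, HasDerivWithinAt (fun y => ‖u y‖ ^ 2)
      (2 * (u' x * (starRingEnd ℂ) (u x)).re) (Set.Icc α β) x := by
    intro x hx
    have h := (hu' x hx).norm_sq
    have heq : (inner ℝ (u x) (u' x) : ℝ) = (u' x * (starRingEnd ℂ) (u x)).re := by
      rw [Complex.inner, mul_comm]
    rwa [heq] at h
  have hftc : ∫ x in α..β, 2 * (u' x * (starRingEnd ℂ) (u x)).re = ‖u β‖ ^ 2 := by
    have h := intervalIntegral.integral_eq_sub_of_hasDeriv_right_of_le hle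
      (hucont.norm.pow 2)
      (fun x hx => ((hderiv x (Set.Ioo_subset_Icc_self hx)).hasDerivAt
        (Icc_mem_nhds hx.1 hx.2)).hasDerivWithinAt)
      (hcont2mul.intervalIntegrable_of_Icc hle)
    rw [h]; simp only [Pi.pow_apply, hα]
    simp
  -- integrability facts
  have hint2 : IntervalIntegrable (fun x => ‖u' x‖ ^ 2) volume α β :=
    hcont2.intervalIntegrable_of_Icc hle
  have hintm : IntervalIntegrable (fun x => (u' x * (starRingEnd ℂ) (u x)).re) volume α β :=
    hcontmul.intervalIntegrable_of_Icc hle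
  have hintc : IntervalIntegrable
      (fun x => ((‖u' x‖ ^ 2 : ℝ) : ℂ) + u' x * (starRingEnd ℂ) (u x)) volume α β :=
    ((Complex.continuous_ofReal.comp_continuousOn hcont2).add
      (hcont.mul hconju)).intervalIntegrable_of_Icc hle
  have hmid : ∫ x in α..β, (u' x * (starRingEnd ℂ) (u x)).re = 1 / 2 * ‖u β‖ ^ 2 := by
    have h2 : ∫ x in α..β, 2 * (u' x * (starRingEnd ℂ) (u x)).re
        = 2 * ∫ x in α..β, (u' x * (starRingEnd ℂ) (u x)).re :=
      intervalIntegral.integral_const_mul _ _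
    rw [h2] at hftc; linarith
  have hre : (∫ x in α..β, ((‖u' x‖ ^ 2 : ℝ) : ℂ) + u' x * (starRingEnd ℂ) (u x)).re
      = (∫ x in α..β, ‖u' x‖ ^ 2) + ∫ x in α..β, (u' x * (starRingEnd ℂ) (u x)).re := by
    have h := integral_re (μ := volume.restrict (Set.Ioc α β)) hintc.1
    rw [intervalIntegral.integral_of_le hle, intervalIntegral.integral_of_le hle,
      intervalIntegral.integral_of_le hle, ← MeasureTheory.integral_add hint2.1 hintm.1]
    refine Eq.trans h.symm ?_
    congr 1
  have part1 : (∫ x in α..β, ((‖u' x‖ ^ 2 : ℝ) : ℂ) + u' x * (starRingEnd ℂ) (u x)).re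
      = (∫ x in α..β, ‖u' x‖ ^ 2) + 1 / 2 * ‖u β‖ ^ 2 := by
    rw [hre, hmid]
  refine ⟨part1, ?_⟩
  -- Poincaré inequality
  have hrep : ∀ x ∈ Set.Icc α β, ‖u x‖ ≤ ∫ t in α..x, ‖u' t‖ := by
    intro x hx
    have hax : α ≤ x := hx.1
    have hsub : Set.Icc α x ⊆ Set.Icc α β := Set.Icc_subset_Icc_right hx.2
    have hftc2 : ∫ t in α..x, u' t = u x - u α :=
      intervalIntegral.integral_eq_sub_of_hasDeriv_right_of_le hax
        (hucont.mono hsub)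
        (fun t ht => ((hu' t (hsub (Set.Ioo_subset_Icc_self ht))).hasDerivAt
          (Icc_mem_nhds ht.1 (lt_of_lt_of_le ht.2 hx.2))).hasDerivWithinAt)
        ((hcont.mono hsub).intervalIntegrable_of_Icc hax)
    have hux : u x = ∫ t in α..x, u' t := by rw [hftc2, hα, sub_zero]
    rw [hux]
    exact intervalIntegral.norm_integral_le_integral_norm hax
  have hI2nonneg : 0 ≤ ∫ x in α..β, ‖u' x‖ ^ 2 :=
    intervalIntegral.integral_nonneg hle fun t _ => sq_nonneg _
  have hpt : ∀ x ∈ Set.Icc α β, ‖u x‖ ^ 2 ≤ (x - α) * ∫ t in α..β, ‖u' t‖ ^ 2 := by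
    intro x hx
    have hax : α ≤ x := hx.1
    have hsub : Set.Icc α x ⊆ Set.Icc α β := Set.Icc_subset_Icc_right hx.2
    have hcs := cs_aux hax (hcont.norm.mono hsub) fun t _ => norm_nonneg _
    have h1 : ‖u x‖ ^ 2 ≤ (∫ t in α..x, ‖u' t‖) ^ 2 :=
      pow_le_pow_left₀ (norm_nonneg _) (hrep x hx) 2
    have hmono : ∫ t in α..x, ‖u' t‖ ^ 2 ≤ ∫ t in α..β, ‖u' t‖ ^ 2 :=
      intervalIntegral.integral_mono_interval le_rfl hax hx.2
        (Filter.eventually_of_mem (self_mem_ae_restrict measurableSet_Ioc)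
          fun t _ => sq_nonneg _) hint2
    calc ‖u x‖ ^ 2 ≤ (∫ t in α..x, ‖u' t‖) ^ 2 := h1
      _ ≤ (x - α) * ∫ t in α..x, ‖u' t‖ ^ 2 := hcs
      _ ≤ (x - α) * ∫ t in α..β, ‖u' t‖ ^ 2 :=
          mul_le_mul_of_nonneg_left hmono (sub_nonneg.2 hax)
  have hP : ∫ x in α..β, ‖u x‖ ^ 2
      ≤ (β - α) ^ 2 / 2 * ∫ t in α..β, ‖u' t‖ ^ 2 := by
    have hmono := intervalIntegral.integral_mono_on hle
      ((hucont.norm.pow 2).intervalIntegrable_of_Icc hle)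
      (((continuous_id.sub continuous_const).mul continuous_const).intervalIntegrable (μ := volume) α β)
      hpt
    have hc : ∫ x in α..β, (x - α) * (∫ t in α..β, ‖u' t‖ ^ 2)
        = (β - α) ^ 2 / 2 * ∫ t in α..β, ‖u' t‖ ^ 2 := by
      rw [intervalIntegral.integral_mul_const]
      congr 1
      have h3 : ∫ x in α..β, (x - α) = ∫ x in (α - α)..(β - α), x :=
        intervalIntegral.integral_comp_sub_right (fun x => x) α
      rw [h3, integral_id]
      ring
    simp only [Pi.pow_apply, Pi.mul_apply, Pi.sub_apply, id_eq] at hmono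
    rw [hc] at hmono
    exact hmono
  have hsplit : ∫ x in α..β, (‖u x‖ ^ 2 + ‖u' x‖ ^ 2)
      = (∫ x in α..β, ‖u x‖ ^ 2) + ∫ x in α..β, ‖u' x‖ ^ 2 :=
    intervalIntegral.integral_add ((hucont.norm.pow 2).intervalIntegrable_of_Icc hle) hint2
  rw [part1, hsplit]
  set m := min (1 / 2 : ℝ) ((β - α) ^ (2 : ℕ))⁻¹ with hm
  have hm0 : 0 ≤ m := le_min (by norm_num) (by positivity)
  have hm1 : m ≤ 1 / 2 := min_le_left _ _
  have hc2 : (0:ℝ) < (β - α) ^ 2 := pow_pos (sub_pos.2 hαβ) 2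
  have hmc : m * (β - α) ^ 2 ≤ 1 := by
    have := min_le_right (1 / 2 : ℝ) ((β - α) ^ (2 : ℕ))⁻¹
    calc m * (β - α) ^ 2 ≤ ((β - α) ^ 2)⁻¹ * (β - α) ^ 2 :=
          mul_le_mul_of_nonneg_right this hc2.le
      _ = 1 := inv_mul_cancel₀ hc2.ne'
  have hP0 : 0 ≤ ∫ x in α..β, ‖u x‖ ^ 2 :=
    intervalIntegral.integral_nonneg hle fun t _ => sq_nonneg _
  nlinarith [mul_le_mul_of_nonneg_left hP hm0,
    mul_le_mul_of_nonneg_right hmc hI2nonneg,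
    mul_le_mul_of_nonneg_right hm1 hI2nonneg,
    sq_nonneg ‖u β‖]
end
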